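/- In the setting of a diffeomorphism covariant Lagrangian L, suppose a local functional identity of the form Σ_{i=0}^{s-1} A_i · (symmetrized i-th derivative of δC) + B · L_ξ γ = 0 holds for all smooth vector fields ξ, where δC depends on up to 2 symmetrized derivatives of ξ and at a point the values of ξ and all its symmetrized derivatives up to any finite order can be prescribed independently. Then each coefficient A_i = 0 for i = 0,…,s-1. -/

import Mathlib

open scoped BigOperators

/-- Abstract form of the argument of Lemma 2.1.  Let `jet k ξ` denote the
`k`-th symmetrized derivative of the vector field `ξ` at a fixed point (with `jet 0 ξ` the
value of `ξ` itself), and suppose that, as for symmetrized covariant derivatives at a point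
of a manifold with a torsion-free connection, the jets of any finite order can be
prescribed arbitrarily and independently (`hsurj`).  Suppose the local functional identity
`∑_{i=0}^{s-1} A_i (jet_{i+2} ξ) + B(jet₀ ξ, jet₁ ξ) = 0` holds for all `ξ` — the `i`-th
term pairing the coefficient `A_i` with the highest-order jet appearing in the `i`-th
symmetrized derivative of `δC` (which depends on `ξ`-jets of order `i+2` and lower, the
lower-order dependence being absorbed into the lower terms and `B`).  Then each
coefficient vanishes: `A_i = 0` for `i = 0, …, s-1`. -/
theorem coefficients_vanish_from_jet_independence
    {VF : Type*} (W : ℕ → Type*)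
    [∀ k, AddCommGroup (W k)] [∀ k, Module ℝ (W k)]
    {Ω : Type*} [AddCommGroup Ω] [Module ℝ Ω]
    (jet : (k : ℕ) → VF → W k)
    (hsurj : ∀ (N : ℕ) (w : (k : ℕ) → W k), ∃ ξ : VF, ∀ k ≤ N, jet k ξ = w k)
    (s : ℕ)
    (A : (i : Fin s) → (W ((i : ℕ) + 2) →ₗ[ℝ] Ω))
    (B : W 0 × W 1 → Ω)
    (hid : ∀ ξ : VF,
      (∑ i : Fin s, A i (jet ((i : ℕ) + 2) ξ)) + B (jet 0 ξ, jet 1 ξ) = 0) :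
    ∀ i : Fin s, A i = 0 := by
  -- First, B(0,0) = 0, using a ξ with all jets zero up to s+2.
  have hB : B (0, 0) = 0 := by
    obtain ⟨ξ, hξ⟩ := hsurj (s + 2) (fun _ => 0)
    have h := hid ξ
    have h0 : jet 0 ξ = 0 := hξ 0 (by omega)
    have h1 : jet 1 ξ = 0 := hξ 1 (by omega)
    have hsum : (∑ i : Fin s, A i (jet ((i : ℕ) + 2) ξ)) = 0 := by
      apply Finset.sum_eq_zero
      intro i _
      rw [hξ ((i : ℕ) + 2) (by omega)]
      exact map_zero (A i)
    rw [h0, h1, hsum, zero_add] at h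
    exact h
  intro i
  ext w
  -- Choose ξ with jet (i+2) = w and all other jets (up to s+2) zero.
  obtain ⟨ξ, hξ⟩ := hsurj (s + 2)
    (fun k => if h : k = (i : ℕ) + 2 then h ▸ w else 0)
  have h := hid ξ
  have h0 : jet 0 ξ = 0 := by
    rw [hξ 0 (by omega)]; simp
  have h1 : jet 1 ξ = 0 := by
    rw [hξ 1 (by omega)]; simp
  have hsum : (∑ j : Fin s, A j (jet ((j : ℕ) + 2) ξ)) = A i w := by
    rw [Finset.sum_eq_single i]
    · rw [hξ ((i : ℕ) + 2) (by omega)]; simp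
    · intro j _ hji
      rw [hξ ((j : ℕ) + 2) (by omega)]
      have : (j : ℕ) + 2 ≠ (i : ℕ) + 2 := by
        simp [Fin.val_eq_val, hji]
      rw [dif_neg this]; simp
    · intro h; exact absurd (Finset.mem_univ i) h
  rw [h0, h1, hsum, hB] at h
  simpa using h
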